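/- Let c₁,…,c_s be distinct real numbers, u₁,…,u_s : ℝ → ℝ twice differentiable, t₀ ∈ ℝ, h ≠ 0 with E(t₀,h) nonsingular, and let A = (a_{ij}) ∈ ℝ^{s×s} be a nonsingular matrix satisfying u_k(t₀+c_i h) = u_k(t₀) + c_i h·u_k'(t₀) + h²·Σ_{j=1}^s a_{ij}·u_k''(t₀+c_j h) for all i,k = 1,…,s. Let f : ℝ × ℝ → ℝ, y₀, y₀' ∈ ℝ, and suppose Y = (Y₁,…,Y_s) ∈ ℝ^s satisfies the stage equations Y_i = y₀ + h c_i y₀' + h²·Σ_{j=1}^s a_{ij}·f(t₀+c_j h, Y_j) for i = 1,…,s. Then there exists a function u in the linear span of {1, t, u₁(t), …, u_s(t)} such that u(t₀) = y₀, u'(t₀) = y₀', u(t₀+c_i h) = Y_i, and u''(t₀+c_i h) = f(t₀+c_i h, u(t₀+c_i h)) for all i = 1,…,s. -/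

import Mathlib

open Matrix BigOperators

theorem stmt_3 (s : ℕ) (c : Fin s → ℝ) (hc : Function.Injective c)
    (u : Fin s → ℝ → ℝ)
    (hu : ∀ k, Differentiable ℝ (u k) ∧ Differentiable ℝ (deriv (u k)))
    (t₀ h : ℝ) (hh : h ≠ 0)
    (hE : IsUnit (Matrix.of fun i k : Fin s =>
      u k (t₀ + c i * h) - u k t₀ - c i * h * deriv (u k) t₀).det)
    (A : Matrix (Fin s) (Fin s) ℝ) (hA : IsUnit A.det)
    (hAu : ∀ i k, u k (t₀ + c i * h) = u k t₀ + c i * h * deriv (u k) t₀ +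
      h ^ 2 * ∑ j, A i j * deriv (deriv (u k)) (t₀ + c j * h))
    (f : ℝ → ℝ → ℝ) (y₀ y₀' : ℝ) (Y : Fin s → ℝ)
    (hY : ∀ i, Y i = y₀ + h * c i * y₀' +
      h ^ 2 * ∑ j, A i j * f (t₀ + c j * h) (Y j)) :
    ∃ (α₀ a₀ : ℝ) (a : Fin s → ℝ),
      (fun x => α₀ + a₀ * x + ∑ k, a k * u k x) t₀ = y₀ ∧
      deriv (fun x => α₀ + a₀ * x + ∑ k, a k * u k x) t₀ = y₀' ∧
      (∀ i, (fun x => α₀ + a₀ * x + ∑ k, a k * u k x) (t₀ + c i * h) = Y i) ∧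
      (∀ i, deriv (deriv (fun x => α₀ + a₀ * x + ∑ k, a k * u k x)) (t₀ + c i * h)
        = f (t₀ + c i * h)
            ((fun x => α₀ + a₀ * x + ∑ k, a k * u k x) (t₀ + c i * h))) := by
  set E : Matrix (Fin s) (Fin s) ℝ := Matrix.of fun i k : Fin s =>
      u k (t₀ + c i * h) - u k t₀ - c i * h * deriv (u k) t₀ with hEdef
  set M : Matrix (Fin s) (Fin s) ℝ := Matrix.of fun j k : Fin s =>
      deriv (deriv (u k)) (t₀ + c j * h) with hMdef
  set g : Fin s → ℝ := fun i => Y i - y₀ - c i * h * y₀' with hgdef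
  set fv : Fin s → ℝ := fun j => f (t₀ + c j * h) (Y j) with hfvdef
  set a : Fin s → ℝ := E⁻¹ *ᵥ g with hadef
  have hEa : E *ᵥ a = g := by
    rw [hadef, Matrix.mulVec_mulVec, Matrix.mul_nonsing_inv E hE, Matrix.one_mulVec]
  have hEAM : E = (h ^ 2) • (A * M) := by
    ext i k
    simp only [hEdef, hMdef, Matrix.smul_apply, Matrix.mul_apply, Matrix.of_apply,
      smul_eq_mul, Finset.mul_sum]
    rw [hAu i k, Finset.mul_sum]
    ring
  have hgAf : g = (h ^ 2) • (A *ᵥ fv) := by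
    ext i
    simp only [hgdef, Pi.smul_apply, Matrix.mulVec, dotProduct, smul_eq_mul]
    rw [hY i]; ring
  have hMa : M *ᵥ a = fv := by
    have hinjA : Function.Injective A.mulVec :=
      Matrix.mulVec_injective_iff_isUnit.2 ((Matrix.isUnit_iff_isUnit_det A).2 hA)
    apply hinjA
    have h2 : (h ^ 2 : ℝ) ≠ 0 := pow_ne_zero 2 hh
    have : (h ^ 2) • (A *ᵥ (M *ᵥ a)) = (h ^ 2) • (A *ᵥ fv) := by
      rw [Matrix.mulVec_mulVec, ← Matrix.smul_mulVec, ← hEAM, hEa, hgAf]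
    exact smul_right_injective _ h2 this
  set a₀ : ℝ := y₀' - ∑ k, a k * deriv (u k) t₀ with ha₀
  set α₀ : ℝ := y₀ - a₀ * t₀ - ∑ k, a k * u k t₀ with hα₀
  have hd1 : ∀ x : ℝ, HasDerivAt (fun x => α₀ + a₀ * x + ∑ k, a k * u k x)
      (a₀ + ∑ k, a k * deriv (u k) x) x := by
    intro x
    have h1 : HasDerivAt (fun x : ℝ => α₀ + a₀ * x) a₀ x := by
      simpa using ((hasDerivAt_id x).const_mul a₀).const_add α₀
    have h2 : HasDerivAt (fun x => ∑ k, a k * u k x) (∑ k, a k * deriv (u k) x) x :=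
      HasDerivAt.fun_sum fun k _ => ((hu k).1.differentiableAt.hasDerivAt).const_mul (a k)
    exact h1.add h2
  have hderiv1 : deriv (fun x => α₀ + a₀ * x + ∑ k, a k * u k x)
      = fun x => a₀ + ∑ k, a k * deriv (u k) x := funext fun x => (hd1 x).deriv
  have hd2 : ∀ x : ℝ, HasDerivAt (fun x => a₀ + ∑ k, a k * deriv (u k) x)
      (∑ k, a k * deriv (deriv (u k)) x) x := by
    intro x
    have h2 : HasDerivAt (fun x => ∑ k, a k * deriv (u k) x)
        (∑ k, a k * deriv (deriv (u k)) x) x :=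
      HasDerivAt.fun_sum fun k _ => ((hu k).2.differentiableAt.hasDerivAt).const_mul (a k)
    simpa using h2.const_add a₀
  have hval : ∀ i, α₀ + a₀ * (t₀ + c i * h) + ∑ k, a k * u k (t₀ + c i * h) = Y i := by
    intro i
    have hEi : ∑ k, E i k * a k = g i := by
      have := congrFun hEa i
      simpa [Matrix.mulVec, dotProduct] using this
    simp only [hEdef, Matrix.of_apply] at hEi
    have expand : ∑ k, a k * u k (t₀ + c i * h)
        = (∑ k, (u k (t₀ + c i * h) - u k t₀ - c i * h * deriv (u k) t₀) * a k)
          + ∑ k, a k * u k t₀ + c i * h * ∑ k, a k * deriv (u k) t₀ := by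
      rw [Finset.mul_sum, ← Finset.sum_add_distrib, ← Finset.sum_add_distrib]
      congr 1; ext k; ring
    rw [expand, hEi, hα₀, ha₀, hgdef]; ring
  refine ⟨α₀, a₀, a, ?_, ?_, fun i => hval i, ?_⟩
  · simp only [hα₀]; ring
  · rw [hderiv1]; simp [ha₀]
  · intro i
    have hderiv2 : deriv (deriv (fun x => α₀ + a₀ * x + ∑ k, a k * u k x)) (t₀ + c i * h)
        = ∑ k, a k * deriv (deriv (u k)) (t₀ + c i * h) := by
      rw [hderiv1]; exact (hd2 _).deriv
    have hMi : ∑ k, M i k * a k = fv i := by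
      have := congrFun hMa i
      simpa [Matrix.mulVec, dotProduct] using this
    simp only [hMdef, Matrix.of_apply] at hMi
    have hcomm : ∑ k, a k * deriv (deriv (u k)) (t₀ + c i * h)
        = ∑ k, deriv (deriv (u k)) (t₀ + c i * h) * a k := by
      congr 1; ext k; ring
    rw [hderiv2, hcomm, hMi, hfvdef]
    simp only
    rw [hval i]
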